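/- Let μ⁺ and μ⁻ be finite Borel measures on ℝ, each with compact support, satisfying μ⁺(ℝ) = μ⁻(ℝ) (i.e. μ = μ⁺ − μ⁻ is a finite signed measure with compact support and total mass zero). Then, with both sides regarded as well-defined elements of (−∞, +∞], ∬ log|x−y|^{−1} dμ⁺(x)dμ⁺(y) + ∬ log|x−y|^{−1} dμ⁻(x)dμ⁻(y) ≥ 2∬ log|x−y|^{−1} dμ⁺(x)dμ⁻(y), and likewise ∬ log|e^x−e^y|^{−1} dμ⁺(x)dμ⁺(y) + ∬ log|e^x−e^y|^{−1} dμ⁻(x)dμ⁻(y) ≥ 2∬ log|e^x−e^y|^{−1} dμ⁺(x)dμ⁻(y). Equivalently, the double integrals ∬ log|x−y|^{−1} dμ(x)dμ(y) and ∬ log|e^x−e^y|^{−1} dμ(x)dμ(y) are nonnegative. -/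

import Mathlib

open MeasureTheory
open scoped ENNReal

/-- Positive part of the logarithmic kernel `log|x−y|⁻¹`, valued in `ℝ≥0∞` (it is `⊤` on the
diagonal). -/
noncomputable def logKerPos (x y : ℝ) : ℝ≥0∞ :=
  if x = y then ⊤ else ENNReal.ofReal (-Real.log |x - y|)

/-- Negative part of the logarithmic kernel `log|x−y|⁻¹`. -/
noncomputable def logKerNeg (x y : ℝ) : ℝ≥0∞ :=
  if x = y then 0 else ENNReal.ofReal (Real.log |x - y|)

/-- Positive part of the kernel `log|eˣ−eʸ|⁻¹`, valued in `ℝ≥0∞`. -/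
noncomputable def expKerPos (x y : ℝ) : ℝ≥0∞ :=
  if x = y then ⊤ else ENNReal.ofReal (-Real.log |Real.exp x - Real.exp y|)

/-- Negative part of the kernel `log|eˣ−eʸ|⁻¹`. -/
noncomputable def expKerNeg (x y : ℝ) : ℝ≥0∞ :=
  if x = y then 0 else ENNReal.ofReal (Real.log |Real.exp x - Real.exp y|)

/-- The double integral `∬ K(x,y) dμ(x)dν(y)` of a kernel with positive part `Kpos` and
negative part `Kneg`, as an element of `EReal` (for compactly supported finite measures the
negative part is finite, so the value lies in `(−∞, +∞]`). -/
noncomputable def dblInt (Kpos Kneg : ℝ → ℝ → ℝ≥0∞) (μ ν : Measure ℝ) : EReal :=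
  ((∫⁻ p : ℝ × ℝ, Kpos p.1 p.2 ∂(μ.prod ν)) : EReal)
    - ((∫⁻ p : ℝ × ℝ, Kneg p.1 p.2 ∂(μ.prod ν)) : EReal)


namespace SLEaux
open Real Set intervalIntegral
open scoped NNReal

lemma exp_int (s : ℝ) (hs : 0 < s) :
    ∫ t in Ioi (0:ℝ), Real.exp (-(s*t)) = s⁻¹ := by
  have := integral_comp_mul_left_Ioi (fun u => Real.exp (-u)) 0 hs
  simp only [mul_zero] at this
  calc ∫ t in Ioi (0:ℝ), Real.exp (-(s*t)) = s⁻¹ • ∫ x in Ioi (0:ℝ), Real.exp (-x) := this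
    _ = s⁻¹ := by rw [integral_exp_neg_Ioi_zero]; simp

lemma exp_lint (s : ℝ) (hs : 0 < s) :
    ∫⁻ t in Ioi (0:ℝ), ENNReal.ofReal (Real.exp (-(s*t)) / 2) = ENNReal.ofReal (s⁻¹ / 2) := by
  rw [← ofReal_integral_eq_lintegral_ofReal]
  · rw [MeasureTheory.integral_div, exp_int s hs]
  · simpa [neg_mul] using ((exp_neg_integrableOn_Ioi 0 hs).div_const 2)
  · filter_upwards with t using by positivity

lemma interval_exp (t : ℝ) (ht : 0 < t) (a b : ℝ) :
    ∫ s in a..b, Real.exp (-(s*t)) = (Real.exp (-(a*t)) - Real.exp (-(b*t))) / t := by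
  have hd : ∀ s ∈ Set.uIcc a b, HasDerivAt (fun s => -(Real.exp (-(s*t)) / t)) (Real.exp (-(s*t))) s := by
    intro s _
    have h1 : HasDerivAt (fun s : ℝ => -(s*t)) (-t) s := by
      simpa using ((hasDerivAt_id s).mul_const t).fun_neg
    have h2 := (Real.hasDerivAt_exp (-(s*t))).comp s h1
    have h3 := (h2.div_const t).fun_neg
    refine h3.congr_deriv ?_
    field_simp
  rw [integral_eq_sub_of_hasDerivAt hd ((Continuous.intervalIntegrable (by fun_prop) a b))]
  ring

lemma frullani (a b : ℝ) (ha : 0 < a) (hab : a ≤ b) :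
    ∫⁻ t in Ioi (0:ℝ), ENNReal.ofReal ((Real.exp (-(a*t)) - Real.exp (-(b*t)))/(2*t))
      = ENNReal.ofReal ((Real.log b - Real.log a)/2) := by
  have hb : 0 < b := lt_of_lt_of_le ha hab
  have key : ∀ t ∈ Ioi (0:ℝ), ENNReal.ofReal ((Real.exp (-(a*t)) - Real.exp (-(b*t)))/(2*t))
      = ∫⁻ s in Ioc a b, ENNReal.ofReal (Real.exp (-(s*t)) / 2) := by
    intro t ht
    rw [mem_Ioi] at ht
    have h1 : (Real.exp (-(a*t)) - Real.exp (-(b*t)))/(2*t)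
        = ∫ s in Ioc a b, Real.exp (-(s*t))/2 := by
      rw [MeasureTheory.integral_div, ← intervalIntegral.integral_of_le hab, interval_exp t ht a b]
      field_simp
    rw [h1, ofReal_integral_eq_lintegral_ofReal]
    · exact (Continuous.integrableOn_Ioc (f := fun s => Real.exp (-(s*t))) (by fun_prop)).div_const 2
    · filter_upwards with s using by positivity
  calc ∫⁻ t in Ioi (0:ℝ), ENNReal.ofReal ((Real.exp (-(a*t)) - Real.exp (-(b*t)))/(2*t))
      = ∫⁻ t in Ioi (0:ℝ), ∫⁻ s in Ioc a b, ENNReal.ofReal (Real.exp (-(s*t)) / 2) :=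
        setLIntegral_congr_fun measurableSet_Ioi key
    _ = ∫⁻ s in Ioc a b, ∫⁻ t in Ioi (0:ℝ), ENNReal.ofReal (Real.exp (-(s*t)) / 2) := by
        apply lintegral_lintegral_swap
        apply Measurable.aemeasurable
        fun_prop
    _ = ∫⁻ s in Ioc a b, ENNReal.ofReal (s⁻¹ / 2) := by
        apply setLIntegral_congr_fun measurableSet_Ioc
        intro s hs
        exact exp_lint s (lt_of_lt_of_le ha hs.1.le)
    _ = ENNReal.ofReal ((Real.log b - Real.log a)/2) := by
        rw [← ofReal_integral_eq_lintegral_ofReal]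
        · rw [show (∫ s in Ioc a b, s⁻¹/2) = (∫ s in Ioc a b, s⁻¹)/2 from MeasureTheory.integral_div _ _,
            ← intervalIntegral.integral_of_le hab, integral_inv_of_pos ha hb,
            Real.log_div hb.ne' ha.ne']
        · refine Integrable.div_const ?_ 2
          refine ((ContinuousOn.integrableOn_compact isCompact_Icc ?_).mono_set Ioc_subset_Icc_self)
          exact ContinuousOn.inv₀ continuousOn_id (fun x hx => (lt_of_lt_of_le ha hx.1).ne')
        · refine (ae_restrict_iff' measurableSet_Ioc).2 (ae_of_all _ fun s hs => ?_)
          have : 0 < s := lt_of_lt_of_le ha hs.1.le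
          positivity

lemma frullani_top (b : ℝ) (hb : 0 < b) :
    ∫⁻ t in Ioi (0:ℝ), ENNReal.ofReal ((1 - Real.exp (-(b*t)))/(2*t)) = ⊤ := by
  refine ENNReal.eq_top_of_forall_nnreal_le fun r => ?_
  obtain ⟨n, hn⟩ := exists_nat_ge (2 * (r:ℝ))
  have ha : 0 < b * Real.exp (-(n:ℝ)) := by positivity
  have hab : b * Real.exp (-(n:ℝ)) ≤ b := by
    nth_rewrite 2 [← mul_one b]
    exact mul_le_mul_of_nonneg_left (Real.exp_le_one_iff.2 (by simp)) hb.le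
  have hval : Real.log b - Real.log (b * Real.exp (-(n:ℝ))) = n := by
    rw [Real.log_mul hb.ne' (Real.exp_ne_zero _), Real.log_exp]; ring
  have hle : ENNReal.ofReal ((n:ℝ)/2) ≤
      ∫⁻ t in Ioi (0:ℝ), ENNReal.ofReal ((1 - Real.exp (-(b*t)))/(2*t)) := by
    rw [← hval, ← frullani _ b ha hab]
    refine setLIntegral_mono_ae (by fun_prop) (ae_of_all _ fun t ht => ?_)
    refine ENNReal.ofReal_le_ofReal ?_
    rw [mem_Ioi] at ht
    have h1 : Real.exp (-(b * Real.exp (-(n:ℝ)) * t)) ≤ 1 :=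
      Real.exp_le_one_iff.2 (neg_nonpos.2 (by positivity))
    have h2 : (0:ℝ) < 2*t := by linarith
    apply div_le_div_of_nonneg_right ?_ h2.le
    linarith
  refine le_trans ?_ hle
  rw [← ENNReal.ofReal_coe_nnreal]
  exact ENNReal.ofReal_le_ofReal (by linarith)

lemma enn_amgm (a b : ℝ≥0∞) : 2 * a * b ≤ a * a + b * b := by
  rcases eq_or_ne a ⊤ with ha | ha
  · have : a * a + b * b = ⊤ := by simp [ha, ENNReal.top_mul_top]
    rw [this]; exact le_top
  · rcases eq_or_ne b ⊤ with hb | hb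
    · have : a * a + b * b = ⊤ := by simp [hb, ENNReal.top_mul_top]
      rw [this]; exact le_top
    · lift a to ℝ≥0 using ha
      lift b to ℝ≥0 using hb
      rw [← ENNReal.coe_ofNat, ← ENNReal.coe_mul, ← ENNReal.coe_mul, ← ENNReal.coe_mul,
        ← ENNReal.coe_mul, ← ENNReal.coe_add, ENNReal.coe_le_coe]
      rw [← NNReal.coe_le_coe]
      push_cast
      nlinarith [sq_nonneg ((a:ℝ) - (b:ℝ))]

lemma gauss_id (t x y s : ℝ) :
    Real.exp (-(2*t*(x-s)^2)) * Real.exp (-(2*t*(s-y)^2))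
      = Real.exp (-((x-y)^2*t)) * Real.exp (-(4*t*(s-(x+y)/2)^2)) := by
  rw [← Real.exp_add, ← Real.exp_add]
  congr 1
  ring

lemma gauss_shift_integrable (t : ℝ) (ht : 0 < t) (m : ℝ) :
    Integrable (fun s : ℝ => Real.exp (-(4*t*(s-m)^2))) := by
  have h := (integrable_exp_neg_mul_sq (by positivity : (0:ℝ) < 4*t)).comp_sub_right m
  simpa [neg_mul] using h

lemma gauss_shift_int (t : ℝ) (ht : 0 < t) (m : ℝ) :
    ∫ s : ℝ, Real.exp (-(4*t*(s-m)^2)) = Real.sqrt (π/(4*t)) := by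
  have h := MeasureTheory.integral_sub_right_eq_self (μ := volume) (fun u : ℝ => Real.exp (-(4*t*u^2))) m
  rw [h]
  simpa [neg_mul] using integral_gaussian (4*t)

lemma gauss_conv (t x y : ℝ) (ht : 0 < t) :
    ∫ s : ℝ, Real.exp (-(2*t*(x-s)^2)) * Real.exp (-(2*t*(s-y)^2))
      = Real.exp (-((x-y)^2*t)) * Real.sqrt (π/(4*t)) := by
  simp only [gauss_id t x y]
  rw [MeasureTheory.integral_const_mul, gauss_shift_int t ht]

lemma gauss_conv_integrable (t x y : ℝ) (ht : 0 < t) :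
    Integrable (fun s : ℝ => Real.exp (-(2*t*(x-s)^2)) * Real.exp (-(2*t*(s-y)^2))) := by
  simp only [gauss_id t x y]
  exact (gauss_shift_integrable t ht _).const_mul _

lemma gauss_pt (t x y : ℝ) (ht : 0 < t) :
    ENNReal.ofReal (Real.exp (-((x-y)^2*t)))
      = ENNReal.ofReal ((Real.sqrt (π/(4*t)))⁻¹) *
          ∫⁻ s : ℝ, ENNReal.ofReal (Real.exp (-(2*t*(x-s)^2)))
            * ENNReal.ofReal (Real.exp (-(2*t*(s-y)^2))) := by
  have h0 : 0 < Real.sqrt (π/(4*t)) := Real.sqrt_pos.2 (by positivity)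
  have h1 : ∀ s : ℝ, ENNReal.ofReal (Real.exp (-(2*t*(x-s)^2)))
      * ENNReal.ofReal (Real.exp (-(2*t*(s-y)^2)))
      = ENNReal.ofReal (Real.exp (-(2*t*(x-s)^2)) * Real.exp (-(2*t*(s-y)^2))) :=
    fun s => (ENNReal.ofReal_mul (by positivity)).symm
  simp only [h1]
  rw [← ofReal_integral_eq_lintegral_ofReal (gauss_conv_integrable t x y ht)
      (ae_of_all _ fun s => by positivity),
    gauss_conv t x y ht, ← ENNReal.ofReal_mul (by positivity)]
  congr 1; field_simp

lemma diag_meas : MeasurableSet {p : ℝ×ℝ | p.1 = p.2} :=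
  (isClosed_eq continuous_fst continuous_snd).measurableSet

lemma meas_logKerPos : Measurable fun p : ℝ×ℝ => logKerPos p.1 p.2 := by
  have : (fun p : ℝ×ℝ => logKerPos p.1 p.2) = fun p : ℝ×ℝ =>
      if p ∈ {q : ℝ×ℝ | q.1 = q.2} then ⊤ else ENNReal.ofReal (-Real.log |p.1 - p.2|) := rfl
  rw [this]
  exact Measurable.ite diag_meas measurable_const
    (by measurability)

lemma meas_logKerNeg : Measurable fun p : ℝ×ℝ => logKerNeg p.1 p.2 := by
  have : (fun p : ℝ×ℝ => logKerNeg p.1 p.2) = fun p : ℝ×ℝ =>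
      if p ∈ {q : ℝ×ℝ | q.1 = q.2} then 0 else ENNReal.ofReal (Real.log |p.1 - p.2|) := rfl
  rw [this]
  exact Measurable.ite diag_meas measurable_const (by measurability)

/- ## the kernel representation -/

/-- the nonnegative kernel, for fixed `M`, as a function of `t` and the pair `p`. -/

noncomputable def g (M t : ℝ) (p : ℝ × ℝ) : ℝ≥0∞ :=
  ENNReal.ofReal ((Real.exp (-((p.1-p.2)^2*t)) - Real.exp (-(M^2*t)))/(2*t))

lemma meas_g_uncurry (M : ℝ) : Measurable (fun q : ℝ × (ℝ×ℝ) => g M q.1 q.2) := by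
  apply ENNReal.measurable_ofReal.comp
  apply Measurable.div <;> fun_prop

lemma Fker_eq (M x y : ℝ) (hM : 1 ≤ M) (hxy : |x - y| ≤ M) :
    (∫⁻ t in Ioi (0:ℝ), g M t (x, y)) + logKerNeg x y
      = logKerPos x y + ENNReal.ofReal (Real.log M) := by
  have hM0 : (0:ℝ) < M := lt_of_lt_of_le one_pos hM
  have hlogM : 0 ≤ Real.log M := Real.log_nonneg hM
  by_cases hd : x = y
  · subst hd
    have h1 : ∀ t : ℝ, g M t (x, x)
        = ENNReal.ofReal ((1 - Real.exp (-(M^2*t)))/(2*t)) := by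
      intro t; unfold g
      simp [sub_self, zero_pow, zero_mul, neg_zero, Real.exp_zero]
    simp only [h1]
    rw [frullani_top (M^2) (by positivity)]
    simp [logKerPos, logKerNeg, top_add]
  · have hu : x - y ≠ 0 := sub_ne_zero.2 hd
    have hu0 : 0 < |x - y| := abs_pos.2 hu
    have ha : 0 < (x-y)^2 := by positivity
    have hab : (x-y)^2 ≤ M^2 := by
      rw [← sq_abs]
      exact pow_le_pow_left₀ (abs_nonneg _) hxy 2
    have h1 : ∀ t : ℝ, g M t (x, y)
        = ENNReal.ofReal ((Real.exp (-((x-y)^2*t)) - Real.exp (-(M^2*t)))/(2*t)) := fun t => rfl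
    simp only [h1]
    rw [frullani _ _ ha hab]
    have hlog : (Real.log (M^2) - Real.log ((x-y)^2))/2 = Real.log M - Real.log |x-y| := by
      rw [Real.log_pow, Real.log_pow, ← Real.log_abs (x - y)]
      push_cast; ring
    rw [hlog]
    have hll : Real.log |x-y| ≤ Real.log M := Real.log_le_log hu0 hxy
    unfold logKerPos logKerNeg
    rw [if_neg hd, if_neg hd]
    by_cases hsgn : 0 ≤ Real.log |x-y|
    · have e1 : ENNReal.ofReal (-Real.log |x-y|) = 0 := ENNReal.ofReal_of_nonpos (by linarith)
      rw [e1, zero_add, ← ENNReal.ofReal_add (by linarith) hsgn]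
      congr 1; ring
    · push_neg at hsgn
      rw [ENNReal.ofReal_of_nonpos hsgn.le, add_zero,
        ← ENNReal.ofReal_add (by linarith) hlogM]
      congr 1; ring

/- ## concentration -/

lemma conc_prod (μ ν : Measure ℝ) [SFinite μ] [SFinite ν] (S : Set ℝ)
    (hμ : μ Sᶜ = 0) (hν : ν Sᶜ = 0) : (μ.prod ν) ((S ×ˢ S : Set (ℝ×ℝ))ᶜ) = 0 := by
  have hsub : ((S ×ˢ S : Set (ℝ×ℝ))ᶜ) ⊆ (Sᶜ ×ˢ (univ : Set ℝ)) ∪ ((univ : Set ℝ) ×ˢ Sᶜ) := by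
    intro p hp
    rw [Set.mem_compl_iff, Set.mem_prod] at hp
    push_neg at hp
    by_cases h1 : p.1 ∈ S
    · exact Or.inr ⟨trivial, hp h1⟩
    · exact Or.inl ⟨h1, trivial⟩
  refine measure_mono_null hsub (measure_union_null ?_ ?_)
  · rw [Measure.prod_prod, hμ, zero_mul]
  · rw [Measure.prod_prod, hν, mul_zero]

lemma ae_mem_prod (μ ν : Measure ℝ) [SFinite μ] [SFinite ν] (S : Set ℝ)
    (hμ : μ Sᶜ = 0) (hν : ν Sᶜ = 0) : ∀ᵐ p ∂(μ.prod ν), p ∈ S ×ˢ S := by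
  rw [ae_iff]
  exact conc_prod μ ν S hμ hν

lemma meas_g (M t : ℝ) : Measurable (g M t) := by
  apply ENNReal.measurable_ofReal.comp
  apply Measurable.div <;> fun_prop

lemma step_const (M t : ℝ) (ht : 0 < t) (μ ν : Measure ℝ)
    [IsFiniteMeasure μ] [IsFiniteMeasure ν] (S : Set ℝ)
    (hSM : ∀ x ∈ S, ∀ y ∈ S, |x - y| ≤ M)
    (hμ : μ Sᶜ = 0) (hν : ν Sᶜ = 0) :
    (∫⁻ p : ℝ×ℝ, g M t p ∂(μ.prod ν))
      + ENNReal.ofReal (Real.exp (-(M^2*t))/(2*t)) * (μ Set.univ * ν Set.univ)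
    = ENNReal.ofReal ((2*t)⁻¹)
        * ∫⁻ p : ℝ×ℝ, ENNReal.ofReal (Real.exp (-((p.1-p.2)^2*t))) ∂(μ.prod ν) := by
  have htot : μ Set.univ * ν Set.univ = (μ.prod ν) Set.univ := by
    rw [← Set.univ_prod_univ, Measure.prod_prod]
  have hPm : Measurable fun p : ℝ×ℝ => ENNReal.ofReal (Real.exp (-((p.1-p.2)^2*t))) :=
    ENNReal.measurable_ofReal.comp (by fun_prop)
  rw [htot, ← lintegral_const (μ := μ.prod ν) (ENNReal.ofReal (Real.exp (-(M^2*t))/(2*t))),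
    ← lintegral_add_right _ measurable_const, ← lintegral_const_mul _ hPm]
  refine lintegral_congr_ae ?_
  filter_upwards [ae_mem_prod μ ν S hμ hν] with p hp
  obtain ⟨h1, h2⟩ := hp
  have hxy : |p.1 - p.2| ≤ M := hSM _ h1 _ h2
  have hle : (p.1-p.2)^2 ≤ M^2 := by
    rw [← sq_abs]; exact pow_le_pow_left₀ (abs_nonneg _) hxy 2
  have hexp : Real.exp (-(M^2*t)) ≤ Real.exp (-((p.1-p.2)^2*t)) :=
    Real.exp_le_exp.2 (by nlinarith)
  unfold g
  rw [← ENNReal.ofReal_add (div_nonneg (sub_nonneg.2 hexp) (by positivity)) (by positivity),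
    ← ENNReal.ofReal_mul (by positivity)]
  congr 1
  field_simp
  ring

lemma step_semigroup (t : ℝ) (ht : 0 < t) (μ ν : Measure ℝ)
    [IsFiniteMeasure μ] [IsFiniteMeasure ν] :
    ∫⁻ p : ℝ×ℝ, ENNReal.ofReal (Real.exp (-((p.1-p.2)^2*t))) ∂(μ.prod ν)
      = ENNReal.ofReal ((Real.sqrt (π/(4*t)))⁻¹) *
          ∫⁻ s : ℝ, (∫⁻ x, ENNReal.ofReal (Real.exp (-(2*t*(x-s)^2))) ∂μ)
            * (∫⁻ y, ENNReal.ofReal (Real.exp (-(2*t*(s-y)^2))) ∂ν) := by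
  have h1 : ∀ p : ℝ×ℝ, ENNReal.ofReal (Real.exp (-((p.1-p.2)^2*t)))
      = ENNReal.ofReal ((Real.sqrt (π/(4*t)))⁻¹) *
        ∫⁻ s : ℝ, ENNReal.ofReal (Real.exp (-(2*t*(p.1-s)^2)))
          * ENNReal.ofReal (Real.exp (-(2*t*(s-p.2)^2))) :=
    fun p => gauss_pt t p.1 p.2 ht
  simp only [h1]
  have hker : Measurable fun q : (ℝ×ℝ) × ℝ =>
      ENNReal.ofReal (Real.exp (-(2*t*(q.1.1-q.2)^2)))
        * ENNReal.ofReal (Real.exp (-(2*t*(q.2-q.1.2)^2))) := by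
    apply Measurable.fun_mul <;> exact ENNReal.measurable_ofReal.comp (by fun_prop)
  rw [lintegral_const_mul _ (hker.lintegral_prod_right')]
  congr 1
  rw [lintegral_lintegral_swap hker.aemeasurable]
  refine lintegral_congr fun s => ?_
  exact lintegral_prod_mul
    (ENNReal.measurable_ofReal.comp (by fun_prop) : Measurable fun x : ℝ =>
      ENNReal.ofReal (Real.exp (-(2*t*(x-s)^2)))).aemeasurable
    (ENNReal.measurable_ofReal.comp (by fun_prop) : Measurable fun y : ℝ =>
      ENNReal.ofReal (Real.exp (-(2*t*(s-y)^2)))).aemeasurable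

lemma step_per_t (M t : ℝ) (ht : 0 < t) (μp μm : Measure ℝ)
    [IsFiniteMeasure μp] [IsFiniteMeasure μm] (S : Set ℝ)
    (hSM : ∀ x ∈ S, ∀ y ∈ S, |x - y| ≤ M)
    (hμ : μp Sᶜ = 0) (hν : μm Sᶜ = 0) (hmass : μp Set.univ = μm Set.univ) :
    2 * ∫⁻ p : ℝ×ℝ, g M t p ∂(μp.prod μm)
      ≤ (∫⁻ p : ℝ×ℝ, g M t p ∂(μp.prod μp)) + ∫⁻ p : ℝ×ℝ, g M t p ∂(μm.prod μm) := by
  -- the potential functions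
  set φ : ℝ → ℝ≥0∞ := fun s => ∫⁻ x, ENNReal.ofReal (Real.exp (-(2*t*(x-s)^2))) ∂μp with hφ
  set ψ : ℝ → ℝ≥0∞ := fun s => ∫⁻ x, ENNReal.ofReal (Real.exp (-(2*t*(x-s)^2))) ∂μm with hψ
  -- symmetrized versions appearing in step_semigroup
  have hsymφ : ∀ s : ℝ, (∫⁻ y, ENNReal.ofReal (Real.exp (-(2*t*(s-y)^2))) ∂μp) = φ s := by
    intro s
    refine lintegral_congr fun y => ?_
    rw [show (s-y)^2 = (y-s)^2 by ring]
  have hsymψ : ∀ s : ℝ, (∫⁻ y, ENNReal.ofReal (Real.exp (-(2*t*(s-y)^2))) ∂μm) = ψ s := by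
    intro s
    refine lintegral_congr fun y => ?_
    rw [show (s-y)^2 = (y-s)^2 by ring]
  have hφm : Measurable φ := by
    apply Measurable.lintegral_prod_right' (f := fun q : ℝ × ℝ =>
      ENNReal.ofReal (Real.exp (-(2*t*(q.2-q.1)^2))))
    exact ENNReal.measurable_ofReal.comp (by fun_prop)
  have hψm : Measurable ψ := by
    apply Measurable.lintegral_prod_right' (f := fun q : ℝ × ℝ =>
      ENNReal.ofReal (Real.exp (-(2*t*(q.2-q.1)^2))))
    exact ENNReal.measurable_ofReal.comp (by fun_prop)
  set D := ENNReal.ofReal ((2*t)⁻¹) with hD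
  set c2 := ENNReal.ofReal ((Real.sqrt (π/(4*t)))⁻¹) with hc2
  set cst := ENNReal.ofReal (Real.exp (-(M^2*t))/(2*t)) * (μm Set.univ * μm Set.univ) with hcst
  have hcfin : cst ≠ ⊤ :=
    ENNReal.mul_ne_top ENNReal.ofReal_ne_top
      (ENNReal.mul_ne_top (measure_ne_top _ _) (measure_ne_top _ _))
  -- the three identities
  have e_pm : (∫⁻ p : ℝ×ℝ, g M t p ∂(μp.prod μm)) + cst = D * (c2 * ∫⁻ s, φ s * ψ s) := by
    have := step_const M t ht μp μm S hSM hμ hν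
    rw [hmass] at this
    rw [hcst, this, step_semigroup t ht μp μm]
    congr 1
    rw [← hc2]
    congr 1
    exact lintegral_congr fun s => by rw [hsymψ s]
  have e_pp : (∫⁻ p : ℝ×ℝ, g M t p ∂(μp.prod μp)) + cst = D * (c2 * ∫⁻ s, φ s * φ s) := by
    have := step_const M t ht μp μp S hSM hμ hμ
    rw [hmass] at this
    rw [hcst, this, step_semigroup t ht μp μp]
    congr 1
    rw [← hc2]
    congr 1
    exact lintegral_congr fun s => by rw [hsymφ s]
  have e_mm : (∫⁻ p : ℝ×ℝ, g M t p ∂(μm.prod μm)) + cst = D * (c2 * ∫⁻ s, ψ s * ψ s) := by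
    have := step_const M t ht μm μm S hSM hν hν
    rw [hcst, this, step_semigroup t ht μm μm]
    congr 1
    rw [← hc2]
    congr 1
    exact lintegral_congr fun s => by rw [hsymψ s]
  -- Cauchy–Schwarz via AM–GM
  have key : 2 * (∫⁻ s, φ s * ψ s) ≤ (∫⁻ s, φ s * φ s) + ∫⁻ s, ψ s * ψ s := by
    rw [← lintegral_const_mul _ (hφm.fun_mul hψm), ← lintegral_add_left (hφm.fun_mul hφm)]
    refine lintegral_mono fun s => ?_
    calc 2 * (φ s * ψ s) = 2 * φ s * ψ s := by rw [mul_assoc]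
      _ ≤ φ s * φ s + ψ s * ψ s := enn_amgm _ _
  -- put it together, cancelling the finite constant
  rw [← ENNReal.add_le_add_iff_right (ENNReal.add_ne_top.2 ⟨hcfin, hcfin⟩)]
  calc 2 * (∫⁻ p : ℝ×ℝ, g M t p ∂(μp.prod μm)) + (cst + cst)
      = 2 * ((∫⁻ p : ℝ×ℝ, g M t p ∂(μp.prod μm)) + cst) := by ring
    _ = D * c2 * (2 * ∫⁻ s, φ s * ψ s) := by rw [e_pm]; ring
    _ ≤ D * c2 * ((∫⁻ s, φ s * φ s) + ∫⁻ s, ψ s * ψ s) := by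
        exact mul_le_mul_right key _
    _ = ((∫⁻ p : ℝ×ℝ, g M t p ∂(μp.prod μp)) + cst)
        + ((∫⁻ p : ℝ×ℝ, g M t p ∂(μm.prod μm)) + cst) := by rw [e_pp, e_mm]; ring
    _ = (∫⁻ p : ℝ×ℝ, g M t p ∂(μp.prod μp)) + (∫⁻ p : ℝ×ℝ, g M t p ∂(μm.prod μm))
        + (cst + cst) := by ring

lemma swap_t (M : ℝ) (θ : Measure (ℝ×ℝ)) [SFinite θ] :
    ∫⁻ p, (∫⁻ t in Ioi (0:ℝ), g M t p) ∂θ = ∫⁻ t in Ioi (0:ℝ), ∫⁻ p, g M t p ∂θ :=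
  (lintegral_lintegral_swap (meas_g_uncurry M).aemeasurable).symm

lemma AB_rel (M : ℝ) (hM : 1 ≤ M) (μ ν : Measure ℝ)
    [IsFiniteMeasure μ] [IsFiniteMeasure ν] (S : Set ℝ)
    (hSM : ∀ x ∈ S, ∀ y ∈ S, |x - y| ≤ M)
    (hμ : μ Sᶜ = 0) (hν : ν Sᶜ = 0) :
    (∫⁻ p : ℝ×ℝ, (∫⁻ t in Ioi (0:ℝ), g M t p) ∂(μ.prod ν))
        + (∫⁻ p : ℝ×ℝ, logKerNeg p.1 p.2 ∂(μ.prod ν))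
      = (∫⁻ p : ℝ×ℝ, logKerPos p.1 p.2 ∂(μ.prod ν))
        + ENNReal.ofReal (Real.log M) * (μ Set.univ * ν Set.univ) := by
  have htot : μ Set.univ * ν Set.univ = (μ.prod ν) Set.univ := by
    rw [← Set.univ_prod_univ, Measure.prod_prod]
  have hFm : Measurable fun p : ℝ×ℝ => ∫⁻ t in Ioi (0:ℝ), g M t p :=
    Measurable.lintegral_prod_left' (meas_g_uncurry M)
  rw [htot, ← lintegral_const (μ := μ.prod ν) (ENNReal.ofReal (Real.log M)),
    ← lintegral_add_left hFm, ← lintegral_add_left meas_logKerPos]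
  refine lintegral_congr_ae ?_
  filter_upwards [ae_mem_prod μ ν S hμ hν] with p hp
  exact Fker_eq M p.1 p.2 hM (hSM _ hp.1 _ hp.2)

lemma B_fin (M : ℝ) (hM : 1 ≤ M) (μ ν : Measure ℝ)
    [IsFiniteMeasure μ] [IsFiniteMeasure ν] (S : Set ℝ)
    (hSM : ∀ x ∈ S, ∀ y ∈ S, |x - y| ≤ M)
    (hμ : μ Sᶜ = 0) (hν : ν Sᶜ = 0) :
    (∫⁻ p : ℝ×ℝ, logKerNeg p.1 p.2 ∂(μ.prod ν)) ≠ ⊤ := by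
  have hb : (∫⁻ p : ℝ×ℝ, logKerNeg p.1 p.2 ∂(μ.prod ν))
      ≤ ∫⁻ _ : ℝ×ℝ, ENNReal.ofReal (Real.log M) ∂(μ.prod ν) := by
    refine lintegral_mono_ae ?_
    filter_upwards [ae_mem_prod μ ν S hμ hν] with p hp
    unfold logKerNeg
    by_cases hd : p.1 = p.2
    · simp [hd]
    · rw [if_neg hd]
      refine ENNReal.ofReal_le_ofReal ?_
      exact Real.log_le_log (abs_pos.2 (sub_ne_zero.2 hd)) (hSM _ hp.1 _ hp.2)
  refine ne_top_of_le_ne_top ?_ hb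
  rw [lintegral_const]
  exact ENNReal.mul_ne_top ENNReal.ofReal_ne_top (measure_ne_top _ _)

lemma ereal_coe_fin (x : ℝ≥0∞) (hx : x ≠ ⊤) : (x : EReal) = ((x.toReal : ℝ) : EReal) := by
  conv_lhs => rw [← ENNReal.ofReal_toReal hx]
  rw [EReal.coe_ennreal_ofReal, max_eq_left ENNReal.toReal_nonneg]

lemma endgame (App Bpp Amm Bmm Apm Bpm Jpp Jmm Jpm D : ℝ≥0∞)
    (hBpp : Bpp ≠ ⊤) (hBmm : Bmm ≠ ⊤) (hBpm : Bpm ≠ ⊤) (hD : D ≠ ⊤)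
    (epp : Jpp + Bpp = App + D) (emm : Jmm + Bmm = Amm + D) (epm : Jpm + Bpm = Apm + D)
    (hineq : 2 * Jpm ≤ Jpp + Jmm) :
    2 * ((Apm : EReal) - (Bpm : EReal))
      ≤ ((App : EReal) - (Bpp : EReal)) + ((Amm : EReal) - (Bmm : EReal)) := by
  have hne_bot : ∀ (A B : ℝ≥0∞), B ≠ ⊤ → (A : EReal) - (B : EReal) ≠ ⊥ := by
    intro A B hB
    rw [sub_eq_add_neg]
    refine fun h => ?_
    rcases EReal.add_eq_bot_iff.1 h with h1 | h1
    · exact EReal.coe_ennreal_ne_bot _ h1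
    · rw [EReal.neg_eq_bot_iff] at h1
      exact hB (EReal.coe_ennreal_eq_top_iff.1 h1)
  have htop_sub : ∀ (B : ℝ≥0∞), B ≠ ⊤ → (⊤ : EReal) - (B : EReal) = ⊤ := by
    intro B hB
    rw [sub_eq_add_neg]
    refine EReal.top_add_of_ne_bot fun h => ?_
    rw [EReal.neg_eq_bot_iff] at h
    exact hB (EReal.coe_ennreal_eq_top_iff.1 h)
  by_cases hApp : App = ⊤
  · rw [hApp, EReal.coe_ennreal_top, htop_sub _ hBpp,
      EReal.top_add_of_ne_bot (hne_bot _ _ hBmm)]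
    exact le_top
  by_cases hAmm : Amm = ⊤
  · rw [hAmm, EReal.coe_ennreal_top, htop_sub _ hBmm,
      EReal.add_top_of_ne_bot (hne_bot _ _ hBpp)]
    exact le_top
  -- finite case
  have hJpp : Jpp ≠ ⊤ := by
    refine ne_top_of_le_ne_top (ENNReal.add_ne_top.2 ⟨hApp, hD⟩) ?_
    rw [← epp]; exact le_self_add
  have hJmm : Jmm ≠ ⊤ := by
    refine ne_top_of_le_ne_top (ENNReal.add_ne_top.2 ⟨hAmm, hD⟩) ?_
    rw [← emm]; exact le_self_add
  have hJpm : Jpm ≠ ⊤ := by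
    refine ne_top_of_le_ne_top (ENNReal.add_ne_top.2 ⟨hJpp, hJmm⟩) ?_
    calc Jpm = 1 * Jpm := (one_mul _).symm
      _ ≤ 2 * Jpm := mul_le_mul_left one_le_two _
      _ ≤ Jpp + Jmm := hineq
  have hApm : Apm ≠ ⊤ := by
    refine ne_top_of_le_ne_top (ENNReal.add_ne_top.2 ⟨hJpm, hBpm⟩) ?_
    rw [epm]; exact le_self_add
  -- move to reals
  have repp : Jpp.toReal + Bpp.toReal = App.toReal + D.toReal := by
    rw [← ENNReal.toReal_add hJpp hBpp, ← ENNReal.toReal_add hApp hD, epp]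
  have remm : Jmm.toReal + Bmm.toReal = Amm.toReal + D.toReal := by
    rw [← ENNReal.toReal_add hJmm hBmm, ← ENNReal.toReal_add hAmm hD, emm]
  have repm : Jpm.toReal + Bpm.toReal = Apm.toReal + D.toReal := by
    rw [← ENNReal.toReal_add hJpm hBpm, ← ENNReal.toReal_add hApm hD, epm]
  have rineq : 2 * Jpm.toReal ≤ Jpp.toReal + Jmm.toReal := by
    have h2 : (2 * Jpm).toReal ≤ (Jpp + Jmm).toReal :=
      ENNReal.toReal_mono (ENNReal.add_ne_top.2 ⟨hJpp, hJmm⟩) hineq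
    rwa [ENNReal.toReal_mul, ENNReal.toReal_ofNat, ENNReal.toReal_add hJpp hJmm] at h2
  rw [ereal_coe_fin App hApp, ereal_coe_fin Amm hAmm, ereal_coe_fin Apm hApm,
    ereal_coe_fin Bpp hBpp, ereal_coe_fin Bmm hBmm, ereal_coe_fin Bpm hBpm,
    ← EReal.coe_sub, ← EReal.coe_sub, ← EReal.coe_sub,
    show (2 : EReal) = ((2:ℝ) : EReal) by norm_cast,
    ← EReal.coe_mul, ← EReal.coe_add, EReal.coe_le_coe_iff]
  linarith

lemma main_log (μp μm : Measure ℝ) [IsFiniteMeasure μp] [IsFiniteMeasure μm]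
    (hKp : ∃ K : Set ℝ, IsCompact K ∧ μp Kᶜ = 0)
    (hKm : ∃ K : Set ℝ, IsCompact K ∧ μm Kᶜ = 0)
    (hmass : μp Set.univ = μm Set.univ) :
    2 * dblInt logKerPos logKerNeg μp μm
      ≤ dblInt logKerPos logKerNeg μp μp + dblInt logKerPos logKerNeg μm μm := by
  obtain ⟨Kp, hKpc, hKp0⟩ := hKp
  obtain ⟨Km, hKmc, hKm0⟩ := hKm
  obtain ⟨r, hr⟩ := (hKpc.union hKmc).isBounded.subset_closedBall 0
  set R := max r 1 with hRdef
  have hR1 : (1:ℝ) ≤ R := le_max_right _ _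
  set S := Icc (-R) R with hSdef
  have hsub : Kp ∪ Km ⊆ S := by
    refine hr.trans ?_
    rw [Real.closedBall_eq_Icc]
    have hrR : r ≤ R := le_max_left r 1
    exact Icc_subset_Icc (by linarith) (by linarith)
  have hμS : μp Sᶜ = 0 :=
    measure_mono_null (compl_subset_compl.2 (subset_union_left.trans hsub)) hKp0
  have hνS : μm Sᶜ = 0 :=
    measure_mono_null (compl_subset_compl.2 (subset_union_right.trans hsub)) hKm0
  set M := 2*R with hMdef
  have hM1 : (1:ℝ) ≤ M := by rw [hMdef]; linarith
  have hSM : ∀ x ∈ S, ∀ y ∈ S, |x - y| ≤ M := by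
    intro x hx y hy
    rw [hSdef, mem_Icc] at hx hy
    rw [abs_le]
    constructor <;> [linarith [hx.1, hy.2]; linarith [hx.2, hy.1]]
  -- the t-integral measurable in t
  have hIm : ∀ θ : Measure (ℝ×ℝ), SigmaFinite θ → Measurable fun t => ∫⁻ p, g M t p ∂θ := by
    intro θ hθ
    exact Measurable.lintegral_prod_right' (meas_g_uncurry M)
  -- J inequality
  have hJineq : 2 * (∫⁻ p : ℝ×ℝ, (∫⁻ t in Ioi (0:ℝ), g M t p) ∂(μp.prod μm))
      ≤ (∫⁻ p : ℝ×ℝ, (∫⁻ t in Ioi (0:ℝ), g M t p) ∂(μp.prod μp))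
        + ∫⁻ p : ℝ×ℝ, (∫⁻ t in Ioi (0:ℝ), g M t p) ∂(μm.prod μm) := by
    rw [swap_t, swap_t, swap_t,
      ← lintegral_const_mul 2 (hIm _ inferInstance),
      ← lintegral_add_left (hIm _ inferInstance)]
    refine lintegral_mono_ae ((ae_restrict_iff' measurableSet_Ioi).2 (ae_of_all _ ?_))
    exact fun t ht => step_per_t M t ht μp μm S hSM hμS hνS hmass
  have hD : ENNReal.ofReal (Real.log M) * (μm Set.univ * μm Set.univ) ≠ ⊤ :=
    ENNReal.mul_ne_top ENNReal.ofReal_ne_top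
      (ENNReal.mul_ne_top (measure_ne_top _ _) (measure_ne_top _ _))
  have epp := AB_rel M hM1 μp μp S hSM hμS hμS
  have emm := AB_rel M hM1 μm μm S hSM hνS hνS
  have epm := AB_rel M hM1 μp μm S hSM hμS hνS
  rw [hmass] at epp epm
  unfold dblInt
  exact endgame _ _ _ _ _ _ _ _ _ _
    (B_fin M hM1 μp μp S hSM hμS hμS) (B_fin M hM1 μm μm S hSM hνS hνS)
    (B_fin M hM1 μp μm S hSM hμS hνS) hD epp emm epm hJineq

lemma lint_map (K : ℝ×ℝ → ℝ≥0∞) (hK : Measurable K) (μ ν : Measure ℝ) [SFinite μ] [SFinite ν] :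
    ∫⁻ p : ℝ×ℝ, K p ∂((μ.map Real.exp).prod (ν.map Real.exp))
      = ∫⁻ p : ℝ×ℝ, K (Real.exp p.1, Real.exp p.2) ∂(μ.prod ν) := by
  rw [Measure.map_prod_map _ _ Real.measurable_exp Real.measurable_exp,
    lintegral_map hK (Real.measurable_exp.prodMap Real.measurable_exp)]
  rfl

lemma dblInt_exp_transfer (μ ν : Measure ℝ) [SFinite μ] [SFinite ν] :
    dblInt expKerPos expKerNeg μ ν
      = dblInt logKerPos logKerNeg (μ.map Real.exp) (ν.map Real.exp) := by
  unfold dblInt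
  have h1 : ∀ x y : ℝ, logKerPos (Real.exp x) (Real.exp y) = expKerPos x y := by
    intro x y
    unfold logKerPos expKerPos
    simp [Real.exp_eq_exp]
  have h2 : ∀ x y : ℝ, logKerNeg (Real.exp x) (Real.exp y) = expKerNeg x y := by
    intro x y
    unfold logKerNeg expKerNeg
    simp [Real.exp_eq_exp]
  rw [lint_map _ meas_logKerPos, lint_map _ meas_logKerNeg]
  simp only [h1, h2]

end SLEaux

/-- If `μ⁺`, `μ⁻` are compactly supported finite Borel measures on `ℝ` with the
same total mass, then
`∬log|x−y|⁻¹ dμ⁺dμ⁺ + ∬log|x−y|⁻¹ dμ⁻dμ⁻ ≥ 2∬log|x−y|⁻¹ dμ⁺dμ⁻`, and likewise for the kernel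
`log|eˣ−eʸ|⁻¹`; i.e. the logarithmic energies of the signed measure `μ⁺ − μ⁻` are
nonnegative. -/
theorem signed_log_energies_nonneg
    (μp μm : Measure ℝ) (hμp : IsFiniteMeasure μp) (hμm : IsFiniteMeasure μm)
    (hKp : ∃ K : Set ℝ, IsCompact K ∧ μp Kᶜ = 0)
    (hKm : ∃ K : Set ℝ, IsCompact K ∧ μm Kᶜ = 0)
    (hmass : μp Set.univ = μm Set.univ) :
    2 * dblInt logKerPos logKerNeg μp μm
      ≤ dblInt logKerPos logKerNeg μp μp + dblInt logKerPos logKerNeg μm μm ∧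
    2 * dblInt expKerPos expKerNeg μp μm
      ≤ dblInt expKerPos expKerNeg μp μp + dblInt expKerPos expKerNeg μm μm := by
  haveI := hμp; haveI := hμm
  constructor
  · exact SLEaux.main_log μp μm hKp hKm hmass
  · rw [SLEaux.dblInt_exp_transfer μp μm, SLEaux.dblInt_exp_transfer μp μp,
      SLEaux.dblInt_exp_transfer μm μm]
    haveI := Measure.isFiniteMeasure_map μp Real.exp
    haveI := Measure.isFiniteMeasure_map μm Real.exp
    refine SLEaux.main_log _ _ ?_ ?_ ?_
    · obtain ⟨K, hKc, hK0⟩ := hKp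
      refine ⟨Real.exp '' K, hKc.image Real.continuous_exp, ?_⟩
      rw [Measure.map_apply Real.measurable_exp
        (hKc.image Real.continuous_exp).isClosed.measurableSet.compl]
      refine measure_mono_null ?_ hK0
      intro x hx
      exact fun hxK => hx (Set.mem_image_of_mem _ hxK)
    · obtain ⟨K, hKc, hK0⟩ := hKm
      refine ⟨Real.exp '' K, hKc.image Real.continuous_exp, ?_⟩
      rw [Measure.map_apply Real.measurable_exp
        (hKc.image Real.continuous_exp).isClosed.measurableSet.compl]
      refine measure_mono_null ?_ hK0
      intro x hx
      exact fun hxK => hx (Set.mem_image_of_mem _ hxK)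
    · rw [Measure.map_apply Real.measurable_exp MeasurableSet.univ,
        Measure.map_apply Real.measurable_exp MeasurableSet.univ,
        Set.preimage_univ, hmass]
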